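/- For v ∈ ℓ²(ℤ) ∩ ℓ^∞(ℤ), the identity ⟨v, D(v²)⟩ = −(Δx²/6) ⟨D₊v, (D₊v)²⟩ holds, where (D₊v)² denotes the pointwise square. -/

import Mathlib

noncomputable section
open scoped BigOperators

/-- forward shift -/
def Sp (v : ℤ → ℝ) : ℤ → ℝ := fun j => v (j + 1)
/-- backward shift -/
def Sm (v : ℤ → ℝ) : ℤ → ℝ := fun j => v (j - 1)
/-- forward discrete derivative -/
def Dp (dx : ℝ) (v : ℤ → ℝ) : ℤ → ℝ := fun j => (v (j + 1) - v j) / dx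
/-- backward discrete derivative -/
def Dm (dx : ℝ) (v : ℤ → ℝ) : ℤ → ℝ := fun j => (v j - v (j - 1)) / dx
/-- centered discrete derivative -/
def Dc (dx : ℝ) (v : ℤ → ℝ) : ℤ → ℝ := fun j => (v (j + 1) - v (j - 1)) / (2 * dx)
/-- discrete Laplacian D₊D₋ -/
def DpDm (dx : ℝ) (v : ℤ → ℝ) : ℤ → ℝ := fun j => (v (j + 1) - 2 * v j + v (j - 1)) / dx ^ 2
/-- discrete inner product ⟨v,w⟩ = Δx ∑ v_j w_j -/
def ip (dx : ℝ) (v w : ℤ → ℝ) : ℝ := dx * ∑' j : ℤ, v j * w j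
/-- squared ℓ²_Δ norm -/
def n2sq (dx : ℝ) (v : ℤ → ℝ) : ℝ := dx * ∑' j : ℤ, (v j) ^ 2
/-- ℓ²_Δ norm -/
def nrm (dx : ℝ) (v : ℤ → ℝ) : ℝ := Real.sqrt (n2sq dx v)
/-- sup norm -/
def supn (v : ℤ → ℝ) : ℝ := ⨆ j : ℤ, |v j|
/-- v ∈ ℓ²(ℤ) -/
def l2 (v : ℤ → ℝ) : Prop := Summable (fun j : ℤ => (v j) ^ 2)
/-- v ∈ ℓ^∞(ℤ) -/
def linf (v : ℤ → ℝ) : Prop := BddAbove (Set.range fun j : ℤ => |v j|)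

private lemma key_bound (M a b : ℝ) (ha : |a| ≤ M) (hb : |b| ≤ M) :
    |a * b ^ 2| ≤ M / 2 * (a ^ 2 + b ^ 2) := by
  have h1 : |a * b ^ 2| = |a| * |b| ^ 2 := by rw [abs_mul, abs_pow]
  rw [h1]
  nlinarith [abs_nonneg a, abs_nonneg b, sq_abs a, sq_abs b,
    mul_nonneg (sub_nonneg.mpr hb) (add_nonneg (sq_nonneg a) (sq_nonneg b)),
    mul_nonneg (abs_nonneg b) (sq_nonneg (|a| - |b|))]

theorem IPP3 (dx : ℝ) (hdx : 0 < dx) (v : ℤ → ℝ) (hv : l2 v) (hv' : linf v) :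
    ip dx v (Dc dx (fun i => (v i) ^ 2))
      = -(dx ^ 2 / 6) * ip dx (Dp dx v) (fun i => (Dp dx v i) ^ 2) := by
  have hdx' : dx ≠ 0 := ne_of_gt hdx
  obtain ⟨M, hM⟩ : ∃ M, ∀ j, |v j| ≤ M := by
    obtain ⟨M, hM⟩ := hv'
    exact ⟨M, fun j => hM (Set.mem_range_self j)⟩
  have sq : Summable (fun j : ℤ => (v j) ^ 2) := hv
  have sq1 : Summable (fun j : ℤ => (v (j + 1)) ^ 2) := by
    have h := ((Equiv.addRight (1 : ℤ)).summable_iff (f := fun j : ℤ => (v j) ^ 2)).mpr hv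
    simpa [Function.comp_def] using h
  have sqm : Summable (fun j : ℤ => (v (j - 1)) ^ 2) := by
    have h := ((Equiv.subRight (1 : ℤ)).summable_iff (f := fun j : ℤ => (v j) ^ 2)).mpr hv
    simpa [Function.comp_def] using h
  -- summability of the cubic-type terms
  have hg : Summable (fun j : ℤ => v j * (v (j + 1)) ^ 2) := by
    apply Summable.of_abs
    apply Summable.of_nonneg_of_le (fun j => abs_nonneg _)
      (fun j => key_bound M _ _ (hM j) (hM (j + 1)))
    exact (sq.add sq1).mul_left (M / 2)
  have hgm : Summable (fun j : ℤ => v j * (v (j - 1)) ^ 2) := by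
    apply Summable.of_abs
    apply Summable.of_nonneg_of_le (fun j => abs_nonneg _)
      (fun j => key_bound M _ _ (hM j) (hM (j - 1)))
    exact (sq.add sqm).mul_left (M / 2)
  have hh : Summable (fun j : ℤ => (v j) ^ 2 * v (j + 1)) := by
    apply Summable.of_abs
    have : ∀ j : ℤ, |(v j) ^ 2 * v (j + 1)| ≤ M / 2 * ((v (j + 1)) ^ 2 + (v j) ^ 2) := by
      intro j
      have := key_bound M (v (j + 1)) (v j) (hM (j + 1)) (hM j)
      calc |(v j) ^ 2 * v (j + 1)| = |v (j + 1) * (v j) ^ 2| := by rw [mul_comm]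
        _ ≤ M / 2 * ((v (j + 1)) ^ 2 + (v j) ^ 2) := this
    apply Summable.of_nonneg_of_le (fun j => abs_nonneg _) this
    exact (sq1.add sq).mul_left (M / 2)
  have hc : Summable (fun j : ℤ => (v j) ^ 3) := by
    apply Summable.of_abs
    have : ∀ j : ℤ, |(v j) ^ 3| ≤ M / 2 * ((v j) ^ 2 + (v j) ^ 2) := by
      intro j
      have := key_bound M (v j) (v j) (hM j) (hM j)
      calc |(v j) ^ 3| = |v j * (v j) ^ 2| := by ring_nf
        _ ≤ M / 2 * ((v j) ^ 2 + (v j) ^ 2) := this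
    apply Summable.of_nonneg_of_le (fun j => abs_nonneg _) this
    exact (sq.add sq).mul_left (M / 2)
  have hc1 : Summable (fun j : ℤ => (v (j + 1)) ^ 3) := by
    have h := ((Equiv.addRight (1 : ℤ)).summable_iff (f := fun j : ℤ => (v j) ^ 3)).mpr hc
    simpa [Function.comp_def] using h
  -- shift identities
  have hB : ∑' j : ℤ, v j * (v (j - 1)) ^ 2 = ∑' j : ℤ, (v j) ^ 2 * v (j + 1) := by
    have h := (Equiv.addRight (1 : ℤ)).tsum_eq (f := fun j : ℤ => v j * (v (j - 1)) ^ 2)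
    simp only [Equiv.coe_addRight, add_sub_cancel_right] at h
    rw [← h]
    exact tsum_congr fun j => by ring
  have hC : ∑' j : ℤ, (v (j + 1)) ^ 3 = ∑' j : ℤ, (v j) ^ 3 := by
    have h := (Equiv.addRight (1 : ℤ)).tsum_eq (f := fun j : ℤ => (v j) ^ 3)
    simpa [Function.comp] using h
  -- rewrite LHS
  have eL : (fun j : ℤ => v j * Dc dx (fun i => (v i) ^ 2) j)
      = fun j : ℤ => (1 / (2 * dx)) * (v j * (v (j + 1)) ^ 2 - v j * (v (j - 1)) ^ 2) := by
    funext j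
    simp only [Dc]
    field_simp
  -- rewrite RHS
  have eR : (fun j : ℤ => Dp dx v j * (Dp dx v j) ^ 2)
      = fun j : ℤ => (1 / dx ^ 3) *
          ((v (j + 1)) ^ 3 - (v j) ^ 3 - 3 * (v j * (v (j + 1)) ^ 2)
            + 3 * ((v j) ^ 2 * v (j + 1))) := by
    funext j
    simp only [Dp]
    field_simp
    ring
  rw [ip, ip, eL, eR, tsum_mul_left, tsum_mul_left,
    Summable.tsum_sub hg hgm,
    Summable.tsum_add ((hc1.sub hc).sub (hg.mul_left 3)) (hh.mul_left 3),
    Summable.tsum_sub (hc1.sub hc) (hg.mul_left 3),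
    Summable.tsum_sub hc1 hc, tsum_mul_left, tsum_mul_left, hB, hC]
  field_simp
  ring
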